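/- Let s ≤ t be integers and let P_s, P_{s+1}, …, P_t be doubly stochastic real n×n matrices. Let Φ(t,s) = P_t P_{t−1} ⋯ P_s. Then ‖Φ(t,s) − J‖ ≤ ∏_{i=s}^{t} ‖P_i − J‖. -/

import Mathlib

open Matrix

/-- Eigenvalues of a Hermitian matrix sorted in ascending order:
`eigAsc hM 0` is the smallest eigenvalue and `eigAsc hM (n-1)` the largest. -/
noncomputable def eigAsc {n : ℕ} {M : Matrix (Fin n) (Fin n) ℝ} (hM : M.IsHermitian) : Fin n → ℝ :=
  hM.eigenvalues ∘ Tuple.sort hM.eigenvalues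

/-- The ℓ² operator (spectral) norm of a real square matrix. -/
noncomputable def specNorm {n : ℕ} (M : Matrix (Fin n) (Fin n) ℝ) : ℝ :=
  ‖Matrix.toEuclideanCLM (𝕜 := ℝ) M‖

/-- A real square matrix is doubly stochastic if its entries are nonnegative and
all row sums and column sums equal one. -/
def DoublyStochastic {n : ℕ} (M : Matrix (Fin n) (Fin n) ℝ) : Prop :=
  (∀ i j, 0 ≤ M i j) ∧ (∀ i, ∑ j, M i j = 1) ∧ (∀ j, ∑ i, M i j = 1)

/-- The matrix `J = (1/n) 𝟙𝟙ᵀ` with all entries equal to `1/n`. -/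
noncomputable def Jmat (n : ℕ) : Matrix (Fin n) (Fin n) ℝ := Matrix.of fun _ _ => (n : ℝ)⁻¹

lemma ds_mul_J {n : ℕ} {M : Matrix (Fin n) (Fin n) ℝ} (hM : DoublyStochastic M) :
    M * Jmat n = Jmat n := by
  ext i j
  simp only [Jmat, mul_apply, of_apply, ← Finset.sum_mul, hM.2.1 i, one_mul]

lemma J_mul_ds {n : ℕ} {M : Matrix (Fin n) (Fin n) ℝ} (hM : DoublyStochastic M) :
    Jmat n * M = Jmat n := by
  ext i j
  simp only [Jmat, mul_apply, of_apply, ← Finset.mul_sum, hM.2.2 j, mul_one]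

lemma J_mul_J {n : ℕ} : Jmat n * Jmat n = Jmat n := by
  ext i j
  have hn : (n : ℝ) ≠ 0 := Nat.cast_ne_zero.mpr (Nat.pos_of_ne_zero (by
    rintro rfl; exact i.elim0)).ne'
  simp only [Jmat, mul_apply, of_apply, Finset.sum_const, Finset.card_univ,
    Fintype.card_fin, nsmul_eq_mul]
  field_simp

lemma specNorm_mul_le {n : ℕ} (A B : Matrix (Fin n) (Fin n) ℝ) :
    specNorm (A * B) ≤ specNorm A * specNorm B := by
  simp only [specNorm, _root_.map_mul]
  exact norm_mul_le _ _

lemma specNorm_nonneg {n : ℕ} (A : Matrix (Fin n) (Fin n) ℝ) : 0 ≤ specNorm A :=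
  norm_nonneg _

lemma specNorm_prod_le {n : ℕ} (a : Matrix (Fin n) (Fin n) ℝ) :
    ∀ l : List (Matrix (Fin n) (Fin n) ℝ),
      specNorm (a :: l).prod ≤ ((a :: l).map specNorm).prod := by
  intro l
  induction l generalizing a with
  | nil => simp
  | cons b l ih =>
    have h1 : specNorm (a * (b :: l).prod) ≤ specNorm a * specNorm ((b :: l).prod) :=
      specNorm_mul_le _ _
    have h2 := ih b
    calc specNorm ((a :: b :: l).prod) ≤ specNorm a * specNorm ((b :: l).prod) := by
          simpa using h1
      _ ≤ specNorm a * ((b :: l).map specNorm).prod :=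
          mul_le_mul_of_nonneg_left h2 (specNorm_nonneg a)
      _ = ((a :: b :: l).map specNorm).prod := by simp

lemma list_prod_range (f : ℕ → ℝ) : ∀ m : ℕ,
    ((List.range m).map f).prod = ∏ k ∈ Finset.range m, f k := by
  intro m
  induction m with
  | zero => simp
  | succ m ih => rw [List.range_succ, Finset.prod_range_succ]; simp [ih]

/-- Key telescoping identity and `· * J = J`. -/
lemma key {n : ℕ} (t : ℕ) (P : ℕ → Matrix (Fin n) (Fin n) ℝ) :
    ∀ m : ℕ, (∀ k, k ≤ m → DoublyStochastic (P (t - k))) →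
      ((List.range (m + 1)).map (fun k => P (t - k))).prod * Jmat n = Jmat n ∧
      ((List.range (m + 1)).map (fun k => P (t - k))).prod - Jmat n =
        ((List.range (m + 1)).map (fun k => P (t - k) - Jmat n)).prod := by
  intro m
  induction m with
  | zero =>
    intro h
    constructor
    · simpa [List.range_succ] using ds_mul_J (h 0 le_rfl)
    · simp [List.range_succ]
  | succ m ih =>
    intro h
    obtain ⟨ih1, ih2⟩ := ih (fun k hk => h k (hk.trans (Nat.le_succ m)))
    have hds := h (m + 1) le_rfl
    constructor
    · rw [List.range_succ]
      simp only [List.map_append, List.prod_append, List.map_cons, List.map_nil,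
        List.prod_cons, List.prod_nil, mul_one, mul_assoc, ds_mul_J hds, ih1]
    · rw [List.range_succ]
      simp only [List.map_append, List.prod_append, List.map_cons, List.map_nil,
        List.prod_cons, List.prod_nil, mul_one]
      rw [← ih2]
      set A := ((List.range (m + 1)).map (fun k => P (t - k))).prod
      have hJA : Jmat n * P (t - (m + 1)) = Jmat n := J_mul_ds hds
      rw [sub_mul, mul_sub, mul_sub, ih1, hJA, J_mul_J]
      abel

/-- Lemma 1: the deflated spectral norm of a product of doubly stochastic matrices
is at most the product of the individual deflated spectral norms. -/
theorem stmt2 {n : ℕ} (s t : ℕ) (hst : s ≤ t)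
    (P : ℕ → Matrix (Fin n) (Fin n) ℝ)
    (hP : ∀ i, s ≤ i → i ≤ t → DoublyStochastic (P i))
    (Φ : Matrix (Fin n) (Fin n) ℝ)
    (hΦ : Φ = ((List.range (t - s + 1)).map (fun k => P (t - k))).prod) :
    specNorm (Φ - Jmat n) ≤ ∏ i ∈ Finset.Icc s t, specNorm (P i - Jmat n) := by
  obtain ⟨-, key2⟩ := key t P (t - s) (fun k hk => hP (t - k) (by omega) (by omega))
  subst hΦ
  rw [key2]
  set m := t - s with hm
  have hL : (List.range (m + 1)).map (fun k => P (t - k) - Jmat n) =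
      (P (t - 0) - Jmat n) ::
        ((List.range m).map (fun k => P (t - (k + 1)) - Jmat n)) := by
    rw [List.range_succ_eq_map]
    simp [List.map_map, Function.comp]
  have h1 : specNorm ((List.range (m + 1)).map (fun k => P (t - k) - Jmat n)).prod ≤
      (((List.range (m + 1)).map (fun k => P (t - k) - Jmat n)).map specNorm).prod := by
    rw [hL]; exact specNorm_prod_le _ _
  refine h1.trans_eq ?_
  rw [List.map_map, list_prod_range]
  refine Finset.prod_nbij' (fun k => t - k) (fun i => t - i) ?_ ?_ ?_ ?_ ?_
  · intro k hk
    simp only [Finset.mem_range] at hk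
    simp only [Finset.mem_Icc]
    omega
  · intro i hi
    simp only [Finset.mem_Icc] at hi
    simp only [Finset.mem_range]
    omega
  · intro k hk
    simp only [Finset.mem_range] at hk
    show t - (t - k) = k
    omega
  · intro i hi
    simp only [Finset.mem_Icc] at hi
    show t - (t - i) = i
    omega
  · intro k hk
    rfl
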